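/- Let p be a prime, n ≥ 1, and let q be a prime such that p^n divides q − 1. Let φ : ℤ/p^nℤ → (ℤ/qℤ)* be an injective group homomorphism (which exists since (ℤ/qℤ)* is cyclic of order q − 1), and let Γ = (ℤ/qℤ) ⋊_φ (ℤ/p^nℤ) be the semidirect product in which the generator class t of ℤ/p^nℤ acts on the additive group ℤ/qℤ by multiplication by φ(t). If there exists an injective group homomorphism from Γ into GL_d(ℂ), then d ≥ p^n. -/

import Mathlib

/-- The action of the unit group `(ℤ/qℤ)ˣ` on the additive group `ℤ/qℤ`
(written multiplicatively) by multiplication `x ↦ u·x`. -/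
def unitsAut (q : ℕ) : (ZMod q)ˣ →* MulAut (Multiplicative (ZMod q)) where
  toFun u :=
    { toFun := fun x => Multiplicative.ofAdd ((u : ZMod q) * x.toAdd)
      invFun := fun x => Multiplicative.ofAdd (((u⁻¹ : (ZMod q)ˣ) : ZMod q) * x.toAdd)
      left_inv := fun x => by simp [← mul_assoc]
      right_inv := fun x => by simp [← mul_assoc]
      map_mul' := fun x y => by simp [mul_add] }
  map_one' := by ext x; simp
  map_mul' u v := by ext x; simp [mul_assoc]

open Polynomial in
lemma my_eval_charpoly {d : ℕ} (M : Matrix (Fin d) (Fin d) ℂ) (μ : ℂ) :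
    M.charpoly.eval μ = ((algebraMap ℂ (Matrix (Fin d) (Fin d) ℂ)) μ - M).det := by
  rw [Matrix.charpoly, _root_.eval_det, Matrix.matPolyEquiv_charmatrix]
  simp [Matrix.scalar_apply, Matrix.algebraMap_eq_diagonal]
  rfl

open Polynomial in
lemma my_det_algebraMap {d : ℕ} (r : ℂ) :
    ((algebraMap ℂ (Matrix (Fin d) (Fin d) ℂ)) r).det = r ^ d := by
  simp [Matrix.algebraMap_eq_diagonal]

open Polynomial in
/-- If `μ` is a root of the char poly of `M`, then `det (algebraMap (μ^m) - M^m) = 0`. -/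
lemma my_root_pow {d : ℕ} (M : Matrix (Fin d) (Fin d) ℂ) (μ : ℂ)
    (h : ((algebraMap ℂ (Matrix (Fin d) (Fin d) ℂ)) μ - M).det = 0) (m : ℕ) :
    ((algebraMap ℂ (Matrix (Fin d) (Fin d) ℂ)) (μ ^ m) - M ^ m).det = 0 := by
  obtain ⟨G, hG⟩ := sub_dvd_pow_sub_pow (X : ℂ[X]) (C μ) m
  have h2 := congrArg (fun P => (Polynomial.aeval M P).det) hG
  simp only [map_sub, map_pow, aeval_X, aeval_C, map_mul, Matrix.det_mul] at h2
  have hMd : (M - (algebraMap ℂ (Matrix (Fin d) (Fin d) ℂ)) μ).det = 0 := by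
    rw [← neg_sub, Matrix.det_neg, h, mul_zero]
  rw [map_pow]
  rw [show (algebraMap ℂ (Matrix (Fin d) (Fin d) ℂ)) μ ^ m - M ^ m =
      -(M ^ m - (algebraMap ℂ (Matrix (Fin d) (Fin d) ℂ)) μ ^ m) from (neg_sub _ _).symm,
    Matrix.det_neg, h2, hMd, zero_mul, mul_zero]

theorem stmt10 (p n : ℕ) (hp : p.Prime) (hn : 1 ≤ n)
    (q : ℕ) (hq : q.Prime) (hdvd : p ^ n ∣ q - 1)
    (φ : Multiplicative (ZMod (p ^ n)) →* (ZMod q)ˣ) (hφ : Function.Injective φ)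
    (d : ℕ) (hd : 0 < d)
    (f : (Multiplicative (ZMod q)) ⋊[(unitsAut q).comp φ] (Multiplicative (ZMod (p ^ n))) →*
      Matrix.GeneralLinearGroup (Fin d) ℂ)
    (hf : Function.Injective f) :
    p ^ n ≤ d := by
  classical
  haveI : NeZero (p ^ n) := ⟨(pow_pos hp.pos n).ne'⟩
  haveI : Fact q.Prime := ⟨hq⟩
  haveI : Fact (1 < q) := ⟨hq.one_lt⟩
  haveI : Nonempty (Fin d) := ⟨⟨0, hd⟩⟩
  set g₀ : Multiplicative (ZMod q) := Multiplicative.ofAdd 1 with hg₀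
  set A := f (SemidirectProduct.inl g₀) with hA
  set M : Matrix (Fin d) (Fin d) ℂ := (A : Matrix (Fin d) (Fin d) ℂ) with hM
  -- M has order dividing q and is not 1
  have hAq : A ^ q = 1 := by
    rw [hA, ← map_pow, ← map_pow]
    have : g₀ ^ q = 1 := by
      rw [hg₀, ← ofAdd_nsmul]
      simp
    rw [this, map_one, map_one]
  have hMq : M ^ q = 1 := by
    rw [hM, ← Units.val_pow_eq_pow_val, hAq, Units.val_one]
  have hMne : M ≠ 1 := by
    intro h
    have hA1 : A = 1 := Units.ext h
    have : SemidirectProduct.inl g₀ =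
        (1 : (Multiplicative (ZMod q)) ⋊[(unitsAut q).comp φ] (Multiplicative (ZMod (p ^ n)))) :=
      hf (by rw [← hA, hA1, map_one])
    have hg1 : g₀ = 1 := SemidirectProduct.inl_injective (by rw [this, map_one])
    have : (1 : ZMod q) = 0 := by simpa [hg₀] using congrArg Multiplicative.toAdd hg1
    exact one_ne_zero this
  -- the conjugation step
  have hstep : ∀ μ : ℂ, ((algebraMap ℂ (Matrix (Fin d) (Fin d) ℂ)) μ - M).det = 0 →
      ∀ x : Multiplicative (ZMod (p ^ n)),
      ((algebraMap ℂ (Matrix (Fin d) (Fin d) ℂ)) (μ ^ ((φ x : ZMod q)).val) - M).det = 0 := by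
    intro μ hμ x
    set c : ℕ := ((φ x : ZMod q)).val with hc
    set T := f (SemidirectProduct.inr x) with hT
    have hact : (((unitsAut q).comp φ) x) g₀ = g₀ ^ c := by
      show Multiplicative.ofAdd ((φ x : ZMod q) * g₀.toAdd) = g₀ ^ c
      rw [hg₀, ← ofAdd_nsmul]
      simp [hc, ZMod.natCast_val, ZMod.cast_id]
    have hconjΓ : (SemidirectProduct.inl (g₀ ^ c) :
        (Multiplicative (ZMod q)) ⋊[(unitsAut q).comp φ] (Multiplicative (ZMod (p ^ n)))) =
        SemidirectProduct.inr x * SemidirectProduct.inl g₀ * SemidirectProduct.inr x⁻¹ := by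
      rw [← hact]
      exact SemidirectProduct.inl_aut x g₀
    have hAc : A ^ c = T * A * T⁻¹ := by
      have h1 : (SemidirectProduct.inr (x⁻¹) :
          (Multiplicative (ZMod q)) ⋊[(unitsAut q).comp φ] (Multiplicative (ZMod (p ^ n)))) =
          (SemidirectProduct.inr x)⁻¹ := map_inv _ _
      rw [hA, hT, ← map_pow, ← map_pow, hconjΓ, h1, map_mul, map_mul, map_inv]
    have hMc : M ^ c = (T : Matrix (Fin d) (Fin d) ℂ) * M *
        ((T⁻¹ : Matrix.GeneralLinearGroup (Fin d) ℂ) : Matrix (Fin d) (Fin d) ℂ) := by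
      rw [hM, ← Units.val_pow_eq_pow_val, hAc]
      rfl
    have hTT : (T : Matrix (Fin d) (Fin d) ℂ) *
        ((T⁻¹ : Matrix.GeneralLinearGroup (Fin d) ℂ) : Matrix (Fin d) (Fin d) ℂ) = 1 := by
      rw [← Units.val_mul, mul_inv_cancel, Units.val_one]
    have hpow := my_root_pow M μ hμ c
    rw [hMc] at hpow
    have e2 : (T : Matrix (Fin d) (Fin d) ℂ) *
        (algebraMap ℂ (Matrix (Fin d) (Fin d) ℂ)) (μ ^ c) *
        ((T⁻¹ : Matrix.GeneralLinearGroup (Fin d) ℂ) : Matrix (Fin d) (Fin d) ℂ) =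
        (algebraMap ℂ (Matrix (Fin d) (Fin d) ℂ)) (μ ^ c) := by
      rw [← Algebra.commutes, mul_assoc, hTT, mul_one]
    have hcomm : (algebraMap ℂ (Matrix (Fin d) (Fin d) ℂ)) (μ ^ c) -
        (T : Matrix (Fin d) (Fin d) ℂ) * M *
          ((T⁻¹ : Matrix.GeneralLinearGroup (Fin d) ℂ) : Matrix (Fin d) (Fin d) ℂ) =
        (T : Matrix (Fin d) (Fin d) ℂ) *
          ((algebraMap ℂ (Matrix (Fin d) (Fin d) ℂ)) (μ ^ c) - M) *
          ((T⁻¹ : Matrix.GeneralLinearGroup (Fin d) ℂ) : Matrix (Fin d) (Fin d) ℂ) := by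
      rw [mul_sub, sub_mul, e2]
    rw [hcomm, Matrix.det_mul, Matrix.det_mul] at hpow
    have hdetT : ((T : Matrix (Fin d) (Fin d) ℂ)).det *
        (((T⁻¹ : Matrix.GeneralLinearGroup (Fin d) ℂ) : Matrix (Fin d) (Fin d) ℂ)).det = 1 := by
      rw [← Matrix.det_mul, hTT, Matrix.det_one]
    rcases mul_eq_zero.mp hpow with h1 | h1
    · rcases mul_eq_zero.mp h1 with h2 | h2
      · exfalso
        apply zero_ne_one (α := ℂ)
        rw [← hdetT, h2, zero_mul]
      · exact h2
    · exfalso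
      apply zero_ne_one (α := ℂ)
      rw [← hdetT, h1, mul_zero]
  -- basic charpoly facts
  have hmonic := M.charpoly_monic
  have hne : M.charpoly ≠ 0 := hmonic.ne_zero
  have hdeg : M.charpoly.natDegree = d := by
    rw [Matrix.charpoly_natDegree_eq_dim, Fintype.card_fin]
  have hsplits : M.charpoly.Splits := IsAlgClosed.splits M.charpoly
  -- there is a root ≠ 1
  obtain ⟨lam, hlroot, hlne⟩ : ∃ z : ℂ, M.charpoly.eval z = 0 ∧ z ≠ 1 := by
    by_contra hcon
    push_neg at hcon
    have hall : ∀ z ∈ M.charpoly.roots, z = (1 : ℂ) := by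
      intro z hz
      exact hcon z ((Polynomial.mem_roots hne).mp hz)
    have hcard : Multiset.card M.charpoly.roots = d := by
      exact (Polynomial.splits_iff_card_roots.mp hsplits).trans hdeg
    have hrepl : M.charpoly.roots = Multiset.replicate d (1 : ℂ) :=
      Multiset.eq_replicate.mpr ⟨hcard, hall⟩
    have hcp : M.charpoly = (Polynomial.X - Polynomial.C (1 : ℂ)) ^ d := by
      conv_lhs => rw [hsplits.eq_prod_roots_of_monic hmonic]
      rw [hrepl, Multiset.map_replicate, Multiset.prod_replicate]
    have hint : IsIntegral ℂ M := ⟨M.charpoly, hmonic, M.aeval_self_charpoly⟩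
    have hdvd1 : minpoly ℂ M ∣ (Polynomial.X - Polynomial.C (1 : ℂ)) ^ d := by
      rw [← hcp]
      exact minpoly.dvd ℂ M M.aeval_self_charpoly
    have hdvd2 : minpoly ℂ M ∣ Polynomial.X ^ q - Polynomial.C (1 : ℂ) := by
      apply minpoly.dvd ℂ M
      simp [hMq]
    have hprime : Prime (Polynomial.X - Polynomial.C (1 : ℂ)) := Polynomial.prime_X_sub_C 1
    obtain ⟨i, hile, hassoc⟩ := (dvd_prime_pow hprime d).mp hdvd1
    have hsf : Squarefree ((Polynomial.X : Polynomial ℂ) ^ q - Polynomial.C (1 : ℂ)) := by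
      apply Polynomial.Separable.squarefree
      exact Polynomial.separable_X_pow_sub_C (1 : ℂ)
        (Nat.cast_ne_zero.mpr hq.pos.ne') one_ne_zero
    match i, hile, hassoc with
    | 0, _, hassoc =>
      rw [pow_zero] at hassoc
      exact minpoly.not_isUnit ℂ M (associated_one_iff_isUnit.mp hassoc)
    | 1, _, hassoc =>
      rw [pow_one] at hassoc
      obtain ⟨u, hu⟩ := hassoc
      have : Polynomial.aeval M (Polynomial.X - Polynomial.C (1 : ℂ)) = 0 := by
        rw [← hu, map_mul, minpoly.aeval, zero_mul]
      have hM1 : M - 1 = 0 := by simpa using this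
      exact hMne (by rw [← sub_eq_zero]; exact hM1)
    | (k + 2), _, hassoc =>
      have hdd : (Polynomial.X - Polynomial.C (1 : ℂ)) *
          (Polynomial.X - Polynomial.C (1 : ℂ)) ∣
          (Polynomial.X : Polynomial ℂ) ^ q - Polynomial.C (1 : ℂ) := by
        have h1 : (Polynomial.X - Polynomial.C (1 : ℂ)) *
            (Polynomial.X - Polynomial.C (1 : ℂ)) ∣
            (Polynomial.X - Polynomial.C (1 : ℂ)) ^ (k + 2) := by
          rw [← pow_two]
          exact pow_dvd_pow _ (by omega)
        exact h1.trans (hassoc.symm.dvd.trans hdvd2)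
      exact hprime.not_unit (hsf _ hdd)
  -- lam ^ q = 1
  have hdet0 : ((algebraMap ℂ (Matrix (Fin d) (Fin d) ℂ)) lam - M).det = 0 := by
    rw [← my_eval_charpoly]; exact hlroot
  have hlq : lam ^ q = 1 := by
    have := my_root_pow M lam hdet0 q
    rw [hMq] at this
    have h1 : ((algebraMap ℂ (Matrix (Fin d) (Fin d) ℂ)) (lam ^ q) - 1) =
        (algebraMap ℂ (Matrix (Fin d) (Fin d) ℂ)) (lam ^ q - 1) := by
      rw [map_sub, map_one]
    rw [h1, my_det_algebraMap] at this
    have h2 : lam ^ q - 1 = 0 := by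
      exact pow_eq_zero_iff hd.ne' |>.mp this
    exact sub_eq_zero.mp h2
  -- order of lam is q
  have horder : orderOf lam = q := orderOf_eq_prime hlq hlne
  -- each power lam ^ (φ x).val is a root of the charpoly
  have hFroot : ∀ x : Multiplicative (ZMod (p ^ n)),
      lam ^ ((φ x : ZMod q)).val ∈ M.charpoly.roots.toFinset := by
    intro x
    rw [Multiset.mem_toFinset, Polynomial.mem_roots hne]
    show M.charpoly.eval _ = 0
    rw [my_eval_charpoly]
    exact hstep lam hdet0 x
  -- injectivity
  have hFinj : Function.Injective
      (fun x : Multiplicative (ZMod (p ^ n)) => lam ^ ((φ x : ZMod q)).val) := by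
    intro x y hxy
    simp only at hxy
    have hmod : ((φ x : ZMod q)).val ≡ ((φ y : ZMod q)).val [MOD q] := by
      have hlu : IsUnit lam := IsUnit.of_pow_eq_one hlq hq.pos.ne'
      have hxy' : hlu.unit ^ ((φ x : ZMod q)).val = hlu.unit ^ ((φ y : ZMod q)).val := by
        apply Units.ext
        simpa [IsUnit.unit_spec] using hxy
      have h := pow_eq_pow_iff_modEq.mp hxy'
      have ho : orderOf hlu.unit = q := by
        rw [← orderOf_units, IsUnit.unit_spec, horder]
      rwa [ho] at h
    have hcast : (((φ x : ZMod q)).val : ZMod q) = (((φ y : ZMod q)).val : ZMod q) :=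
      (ZMod.natCast_eq_natCast_iff _ _ _).mpr hmod
    apply hφ
    apply Units.ext
    simpa [ZMod.natCast_val, ZMod.cast_id] using hcast
  -- counting
  calc p ^ n = Fintype.card (Multiplicative (ZMod (p ^ n))) := by
        rw [Fintype.card_multiplicative, ZMod.card]
    _ ≤ (M.charpoly.roots.toFinset).card := by
        apply Finset.card_le_card_of_injOn
          (fun x : Multiplicative (ZMod (p ^ n)) => lam ^ ((φ x : ZMod q)).val)
        · intro x _
          exact hFroot x
        · exact hFinj.injOn
    _ ≤ Multiset.card M.charpoly.roots := Multiset.toFinset_card_le _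
    _ ≤ M.charpoly.natDegree := Polynomial.card_roots' _
    _ = d := hdeg
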